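/- Let α_{ij} (1 ≤ i,j ≤ 3) and α₁, α₂, α₃, w₁, w₂ be real numbers with w₁ + w₂ = 1 and w₂ ≠ 0, and let a, b, c : ℕ → ℝ satisfy a_x = α₁₁·a_{x-1} + α₁₂·b_{x-1} + α₁₃·c_{x-1} + α₁, b_x = α₂₁·a_{x-1} + α₂₂·b_{x-1} + α₂₃·c_{x-1} + α₂, c_x = α₃₁·a_{x-1} + α₃₂·b_{x-1} + α₃₃·c_{x-1} + α₃ for all x ≥ 1. Assume α₁₁ + α₁₂ + α₁₃ = α₂₁ + α₂₂ + α₂₃ = α₃₁ + α₃₂ + α₃₃ and b_x = w₁·a_x + w₂·c_x for all x. Then, with α'₁₁ = α₁₁ − (w₁/w₂)·α₁₃, α'₁₂ = α₁₂ + (1/w₂)·α₁₃, α'₂₁ = α₂₁ − (w₁/w₂)·α₂₃, α'₂₂ = α₂₂ + (1/w₂)·α₂₃, one has for all x ≥ 1: a_x = α'₁₁·a_{x-1} + α'₁₂·b_{x-1} + α₁ and b_x = α'₂₁·a_{x-1} + α'₂₂·b_{x-1} + α₂, and moreover α'₁₁ + α'₁₂ = α'₂₁ + α'₂₂. -/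

import Mathlib

/-- Decomposition of the order-three matrix recurrence (with equal row sums and
`b = w₁·a + w₂·c`) into a pair of simultaneous recurrences in `a` and `b`;
the new row sums of coefficients are again equal. -/
theorem decompose_to_ab (α11 α12 α13 α21 α22 α23 α31 α32 α33 α1 α2 α3 w1 w2 : ℝ)
    (hw : w1 + w2 = 1) (hw2 : w2 ≠ 0) (a b c : ℕ → ℝ)
    (ha : ∀ x, 1 ≤ x → a x = α11 * a (x - 1) + α12 * b (x - 1) + α13 * c (x - 1) + α1)
    (hb : ∀ x, 1 ≤ x → b x = α21 * a (x - 1) + α22 * b (x - 1) + α23 * c (x - 1) + α2)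
    (hc : ∀ x, 1 ≤ x → c x = α31 * a (x - 1) + α32 * b (x - 1) + α33 * c (x - 1) + α3)
    (hrow1 : α11 + α12 + α13 = α21 + α22 + α23)
    (hrow2 : α21 + α22 + α23 = α31 + α32 + α33)
    (hcomb : ∀ x, b x = w1 * a x + w2 * c x)
    (α11' α12' α21' α22' : ℝ)
    (h11' : α11' = α11 - (w1 / w2) * α13) (h12' : α12' = α12 + (1 / w2) * α13)
    (h21' : α21' = α21 - (w1 / w2) * α23) (h22' : α22' = α22 + (1 / w2) * α23) :
    (∀ x, 1 ≤ x →
      a x = α11' * a (x - 1) + α12' * b (x - 1) + α1 ∧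
      b x = α21' * a (x - 1) + α22' * b (x - 1) + α2) ∧
    α11' + α12' = α21' + α22' := by
  constructor
  · intro x hx
    have hcx : c (x - 1) = (b (x - 1) - w1 * a (x - 1)) / w2 := by
      have := hcomb (x - 1); field_simp; linarith
    constructor
    · rw [ha x hx, hcx, h11', h12']; field_simp; ring
    · rw [hb x hx, hcx, h21', h22']; field_simp; ring
  · rw [h11', h12', h21', h22']
    have hw1 : w1 = 1 - w2 := by linarith
    field_simp [hw1]
    linear_combination w2 * hrow1 + (α23 - α13) * hw
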